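/- Let {x^k} be a sequence of componentwise positive vectors in ℝ^N with ∑_{j=1}^N x_j^k = ∑_{i=1}^M b_i for all k, generated by the perturbed EM iteration x^{k+1} = P(y^k) with y^k = x^k + β_k v^k > 0 componentwise, where β_k ≥ 0 with β_k → 0 and {v^k} is a bounded sequence in ℝ^N, and suppose the sequence {I_A^b(x^k)} is nonincreasing. Then {x^k} has a convergent subsequence; moreover, if x̂ is the limit of any convergent subsequence of {x^k} and d_i(x̂) > 0 for all i, then x̂ is a fixed point of the EM operator, i.e. P(x̂) = x̂. -/
import Mathlib


open Finset Filter Topology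

noncomputable def dd {M N : ℕ} (A : Fin M → Fin N → ℝ) (x : Fin N → ℝ) (i : Fin M) : ℝ :=
  ∑ j, A i j * x j

noncomputable def ff {M N : ℕ} (A : Fin M → Fin N → ℝ) (b : Fin M → ℝ) (x : Fin N → ℝ) (j : Fin N) : ℝ :=
  ∑ i, A i j * b i / dd A x i

noncomputable def EMop {M N : ℕ} (A : Fin M → Fin N → ℝ) (b : Fin M → ℝ) (x : Fin N → ℝ) : Fin N → ℝ :=
  fun j => x j * ff A b x j

noncomputable def KL {N : ℕ} (u v : Fin N → ℝ) : ℝ :=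
  (∑ j, u j * Real.log (u j / v j)) - ∑ j, (u j - v j)

noncomputable def IAb {M N : ℕ} (A : Fin M → Fin N → ℝ) (b : Fin M → ℝ) (x : Fin N → ℝ) : ℝ :=
  (∑ i, b i * Real.log (b i / dd A x i)) - ∑ i, (b i - dd A x i)

noncomputable def finSup0 {ι : Type*} (s : Finset ι) (g : ι → ℝ) : ℝ :=
  if h : s.Nonempty then s.sup' h g else 0

noncomputable def finInf0 {ι : Type*} (s : Finset ι) (g : ι → ℝ) : ℝ :=
  if h : s.Nonempty then s.inf' h g else 0

section aux
variable {M N : ℕ}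

lemma dd_pos {A : Fin M → Fin N → ℝ} (hA : ∀ i j, 0 ≤ A i j)
    (hrow : ∀ i, ∃ j, 0 < A i j) {x : Fin N → ℝ} (hx : ∀ j, 0 < x j) (i : Fin M) :
    0 < dd A x i := by
  apply Finset.sum_pos'
  · exact fun j _ => mul_nonneg (hA i j) (hx j).le
  · obtain ⟨j, hj⟩ := hrow i
    exact ⟨j, Finset.mem_univ j, mul_pos hj (hx j)⟩

lemma col_pos {A : Fin M → Fin N → ℝ}
    (hcol : ∀ j, ∑ i, A i j = 1) (j : Fin N) : ∃ i, 0 < A i j := by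
  by_contra h
  push_neg at h
  have h2 : (∑ i, A i j) ≤ 0 := Finset.sum_nonpos fun i _ => h i
  rw [hcol j] at h2; linarith

lemma ff_pos {A : Fin M → Fin N → ℝ} {b : Fin M → ℝ}
    (hA : ∀ i j, 0 ≤ A i j) (hcol : ∀ j, ∑ i, A i j = 1) (hb : ∀ i, 0 < b i)
    {x : Fin N → ℝ} (hd : ∀ i, 0 < dd A x i) (j : Fin N) : 0 < ff A b x j := by
  apply Finset.sum_pos'
  · exact fun i _ => div_nonneg (mul_nonneg (hA i j) (hb i).le) (hd i).le
  · obtain ⟨i, hi⟩ := col_pos hcol j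
    exact ⟨i, Finset.mem_univ i, div_pos (mul_pos hi (hb i)) (hd i)⟩

lemma g_nonneg {u v : ℝ} (hu : 0 < u) (hv : 0 < v) :
    0 ≤ u * Real.log (u / v) - (u - v) := by
  have h := Real.log_le_sub_one_of_pos (div_pos hv hu)
  have hlog : Real.log (u / v) = - Real.log (v / u) := by
    rw [← Real.log_inv]; congr 1; rw [inv_div]
  have h1 : u * (v / u) = v := by field_simp
  nlinarith [mul_le_mul_of_nonneg_left h hu.le]

lemma g_eq_zero {u v : ℝ} (hu : 0 < u) (hv : 0 < v)
    (h : u * Real.log (u / v) - (u - v) = 0) : u = v := by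
  by_contra hne
  have hvu : v / u ≠ 1 := by
    intro h1
    exact hne ((div_eq_one_iff_eq hu.ne').1 h1).symm
  have h2 := Real.log_lt_sub_one_of_pos (div_pos hv hu) hvu
  have hlog : Real.log (u / v) = - Real.log (v / u) := by
    rw [← Real.log_inv]; congr 1; rw [inv_div]
  have h1 : u * (v / u) = v := by field_simp
  nlinarith [mul_lt_mul_of_pos_left h2 hu]

lemma KL_eq {u v : Fin N → ℝ} :
    KL u v = ∑ j, (u j * Real.log (u j / v j) - (u j - v j)) := by
  rw [KL, ← Finset.sum_sub_distrib]

lemma KL_nonneg {u v : Fin N → ℝ} (hu : ∀ j, 0 < u j) (hv : ∀ j, 0 < v j) :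
    0 ≤ KL u v := by
  rw [KL_eq]
  exact Finset.sum_nonneg fun j _ => g_nonneg (hu j) (hv j)

lemma IAb_nonneg {A : Fin M → Fin N → ℝ} {b : Fin M → ℝ} (hb : ∀ i, 0 < b i)
    {x : Fin N → ℝ} (hd : ∀ i, 0 < dd A x i) : 0 ≤ IAb A b x := by
  rw [IAb, ← Finset.sum_sub_distrib]
  exact Finset.sum_nonneg fun i _ => g_nonneg (hb i) (hd i)

lemma sum_dd {A : Fin M → Fin N → ℝ} (hcol : ∀ j, ∑ i, A i j = 1) (x : Fin N → ℝ) :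
    ∑ i, dd A x i = ∑ j, x j := by
  simp only [dd]
  rw [Finset.sum_comm]
  refine Finset.sum_congr rfl fun j _ => ?_
  rw [← Finset.sum_mul, hcol j, one_mul]
end aux

section descent
variable {M N : ℕ}

lemma IAb_expand {A : Fin M → Fin N → ℝ} {b : Fin M → ℝ}
    (hcol : ∀ j, ∑ i, A i j = 1) (hb : ∀ i, 0 < b i)
    {z : Fin N → ℝ} (hz : ∀ i, 0 < dd A z i) :
    IAb A b z = ((∑ i, b i * Real.log (b i)) - ∑ i, b i * Real.log (dd A z i))
      - ((∑ i, b i) - ∑ j, z j) := by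
  rw [IAb]
  rw [show (∑ i, b i * Real.log (b i / dd A z i))
      = (∑ i, (b i * Real.log (b i) - b i * Real.log (dd A z i))) from
    Finset.sum_congr rfl fun i _ => by rw [Real.log_div (hb i).ne' (hz i).ne']; ring]
  rw [Finset.sum_sub_distrib, Finset.sum_sub_distrib, sum_dd hcol]

lemma descent {A : Fin M → Fin N → ℝ} {b : Fin M → ℝ}
    (hA : ∀ i j, 0 ≤ A i j) (hcol : ∀ j, ∑ i, A i j = 1)
    (hrow : ∀ i, ∃ j, 0 < A i j) (hb : ∀ i, 0 < b i)
    {y : Fin N → ℝ} (hy : ∀ j, 0 < y j) :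
    IAb A b (EMop A b y) + KL (EMop A b y) y ≤ IAb A b y := by
  have hd : ∀ i, 0 < dd A y i := dd_pos hA hrow hy
  have hf : ∀ j, 0 < ff A b y j := ff_pos hA hcol hb hd
  have hxx : ∀ j, 0 < EMop A b y j := fun j => mul_pos (hy j) (hf j)
  have hdx : ∀ i, 0 < dd A (EMop A b y) i := dd_pos hA hrow hxx
  have J : ∀ i, ∑ j, (A i j * y j / dd A y i) * Real.log (ff A b y j)
      ≤ Real.log (dd A (EMop A b y) i) - Real.log (dd A y i) := by
    intro i
    have hw : ∑ j, A i j * y j / dd A y i = 1 := by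
      rw [← Finset.sum_div]; exact div_self (hd i).ne'
    have hJ := (strictConcaveOn_log_Ioi.concaveOn).le_map_sum
      (t := Finset.univ) (w := fun j => A i j * y j / dd A y i) (p := ff A b y)
      (fun j _ => by have := hA i j; have := (hy j).le; have := (hd i).le; positivity)
      hw (fun j _ => hf j)
    simp only [smul_eq_mul] at hJ
    have hsum : ∑ j, (A i j * y j / dd A y i) * ff A b y j
        = dd A (EMop A b y) i / dd A y i := by
      rw [show dd A (EMop A b y) i = ∑ j, A i j * (y j * ff A b y j) from rfl,
        Finset.sum_div]
      exact Finset.sum_congr rfl fun j _ => by ring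
    rw [hsum, Real.log_div (hdx i).ne' (hd i).ne'] at hJ
    exact hJ
  have key1 : ∀ j, ∑ i, b i * ((A i j * y j / dd A y i) * Real.log (ff A b y j))
      = EMop A b y j * Real.log (ff A b y j) := by
    intro j
    calc ∑ i, b i * ((A i j * y j / dd A y i) * Real.log (ff A b y j))
        = (∑ i, A i j * b i / dd A y i) * (y j * Real.log (ff A b y j)) := by
          rw [Finset.sum_mul]; exact Finset.sum_congr rfl fun i _ => by ring
      _ = EMop A b y j * Real.log (ff A b y j) := by rw [EMop, ff]; ring
  have key : ∑ j, EMop A b y j * Real.log (ff A b y j)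
      ≤ (∑ i, b i * Real.log (dd A (EMop A b y) i)) - ∑ i, b i * Real.log (dd A y i) := by
    rw [← Finset.sum_sub_distrib]
    have h1 : ∑ j, EMop A b y j * Real.log (ff A b y j)
        = ∑ i, b i * ∑ j, (A i j * y j / dd A y i) * Real.log (ff A b y j) := by
      simp_rw [Finset.mul_sum]
      rw [Finset.sum_comm]
      exact Finset.sum_congr rfl fun j _ => (key1 j).symm
    rw [h1]
    apply Finset.sum_le_sum
    intro i _
    calc b i * ∑ j, (A i j * y j / dd A y i) * Real.log (ff A b y j)
        ≤ b i * (Real.log (dd A (EMop A b y) i) - Real.log (dd A y i)) :=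
          mul_le_mul_of_nonneg_left (J i) (hb i).le
      _ = b i * Real.log (dd A (EMop A b y) i) - b i * Real.log (dd A y i) := by ring
  have hKLe : KL (EMop A b y) y
      = (∑ j, EMop A b y j * Real.log (ff A b y j))
        - ((∑ j, EMop A b y j) - ∑ j, y j) := by
    rw [KL, Finset.sum_sub_distrib]
    congr 1
    refine Finset.sum_congr rfl fun j _ => ?_
    congr 2
    rw [EMop, mul_comm (y j), mul_div_assoc, div_self (hy j).ne', mul_one]
  rw [IAb_expand hcol hb hd, IAb_expand hcol hb hdx, hKLe]
  linarith [key]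

lemma tendsto_dd {A : Fin M → Fin N → ℝ} {z : ℕ → Fin N → ℝ} {zl : Fin N → ℝ}
    (hz : Tendsto z atTop (nhds zl)) (i : Fin M) :
    Tendsto (fun k => dd A (z k) i) atTop (nhds (dd A zl i)) := by
  simp only [dd]
  exact tendsto_finset_sum _ fun j _ => tendsto_const_nhds.mul (tendsto_pi_nhds.1 hz j)

lemma tendsto_ff {A : Fin M → Fin N → ℝ} {b : Fin M → ℝ} {z : ℕ → Fin N → ℝ}
    {zl : Fin N → ℝ} (hz : Tendsto z atTop (nhds zl))
    (hd : ∀ i, 0 < dd A zl i) (j : Fin N) :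
    Tendsto (fun k => ff A b (z k) j) atTop (nhds (ff A b zl j)) := by
  simp only [ff]
  exact tendsto_finset_sum _ fun i _ =>
    tendsto_const_nhds.div (tendsto_dd hz i) (hd i).ne'

lemma tendsto_IAb {A : Fin M → Fin N → ℝ} {b : Fin M → ℝ} (hb : ∀ i, 0 < b i)
    {z : ℕ → Fin N → ℝ} {zl : Fin N → ℝ} (hz : Tendsto z atTop (nhds zl))
    (hd : ∀ i, 0 < dd A zl i) :
    Tendsto (fun k => IAb A b (z k)) atTop (nhds (IAb A b zl)) := by
  simp only [IAb]
  apply Tendsto.sub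
  · refine tendsto_finset_sum _ fun i _ => tendsto_const_nhds.mul ?_
    exact (tendsto_const_nhds.div (tendsto_dd hz i) (hd i).ne').log
      (ne_of_gt (div_pos (hb i) (hd i)))
  · exact tendsto_finset_sum _ fun i _ => tendsto_const_nhds.sub (tendsto_dd hz i)

end descent

theorem stmt_9
    (M N : ℕ) (hM : 0 < M) (hN : 0 < N)
    (A : Fin M → Fin N → ℝ) (b : Fin M → ℝ)
    (hA : ∀ i j, 0 ≤ A i j)
    (hcol : ∀ j, ∑ i, A i j = 1)
    (hrow : ∀ i, ∃ j, 0 < A i j)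
    (hb : ∀ i, 0 < b i)
    (x y : ℕ → Fin N → ℝ) (β : ℕ → ℝ) (v : ℕ → Fin N → ℝ)
    (hx : ∀ k j, 0 < x k j)
    (hmass : ∀ k, (∑ j, x k j) = ∑ i, b i)
    (hy : ∀ k, y k = fun j => x k j + β k * v k j)
    (hypos : ∀ k j, 0 < y k j)
    (hiter : ∀ k, x (k + 1) = EMop A b (y k))
    (hβ : ∀ k, 0 ≤ β k)
    (hβ0 : Tendsto β atTop (nhds 0))
    (hvbd : ∃ C : ℝ, ∀ k j, |v k j| ≤ C)
    (hmono : Antitone (fun k => IAb A b (x k))) :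
    (∃ φ : ℕ → ℕ, StrictMono φ ∧ ∃ l : Fin N → ℝ,
      Tendsto (fun k => x (φ k)) atTop (nhds l)) ∧
    (∀ xh : Fin N → ℝ, ∀ φ : ℕ → ℕ, StrictMono φ →
      Tendsto (fun k => x (φ k)) atTop (nhds xh) →
      (∀ i, 0 < dd A xh i) → EMop A b xh = xh) := by
  constructor
  · -- compactness
    have hmem : ∀ k, x k ∈ Set.Icc (fun _ : Fin N => (0:ℝ)) (fun _ => ∑ i, b i) := by
      intro k
      refine ⟨fun j => (hx k j).le, fun j => ?_⟩
      calc x k j ≤ ∑ j', x k j' :=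
            Finset.single_le_sum (fun j' _ => (hx k j').le) (Finset.mem_univ j)
        _ = ∑ i, b i := hmass k
    obtain ⟨l, -, φ, hφ, hconv⟩ := (isCompact_Icc).tendsto_subseq hmem
    exact ⟨φ, hφ, l, hconv⟩
  · intro xh φ hφ hconv hdpos
    have hφtop : Tendsto φ atTop atTop := hφ.tendsto_atTop
    have hdk : ∀ k i, 0 < dd A (x k) i := fun k => dd_pos hA hrow (hx k)
    -- limit of the monotone sequence
    have hbdd : BddBelow (Set.range fun k => IAb A b (x k)) :=
      ⟨0, by rintro _ ⟨k, rfl⟩; exact IAb_nonneg hb (hdk k)⟩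
    have hL : Tendsto (fun k => IAb A b (x k)) atTop (nhds (⨅ k, IAb A b (x k))) :=
      tendsto_atTop_ciInf hmono hbdd
    set L : ℝ := ⨅ k, IAb A b (x k) with hLdef
    have h1 : Tendsto (fun k => IAb A b (x (φ k))) atTop (nhds L) := hL.comp hφtop
    have h2 : Tendsto (fun k => IAb A b (x (φ k))) atTop (nhds (IAb A b xh)) :=
      tendsto_IAb hb hconv hdpos
    have hLx : IAb A b xh = L := tendsto_nhds_unique h2 h1
    -- y subsequence converges to xh
    obtain ⟨C, hC⟩ := hvbd
    have hyconv : Tendsto (fun k => y (φ k)) atTop (nhds xh) := by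
      rw [tendsto_pi_nhds]
      intro j
      have hxj : Tendsto (fun k => x (φ k) j) atTop (nhds (xh j)) :=
        tendsto_pi_nhds.1 hconv j
      have hpert : Tendsto (fun k => β (φ k) * v (φ k) j) atTop (nhds 0) := by
        refine squeeze_zero_norm (a := fun k => β (φ k) * C) (fun k => ?_) ?_
        · rw [Real.norm_eq_abs, abs_mul, abs_of_nonneg (hβ _)]
          exact mul_le_mul_of_nonneg_left (hC _ j) (hβ _)
        · have := (hβ0.comp hφtop).mul_const C
          simpa using this
      have h3 := hxj.add hpert
      rw [add_zero] at h3
      simp only [hy]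
      exact h3
    have hIy : Tendsto (fun k => IAb A b (y (φ k))) atTop (nhds L) :=
      hLx ▸ tendsto_IAb hb hyconv hdpos
    -- next iterates
    have hnexttop : Tendsto (fun k => φ k + 1) atTop atTop :=
      tendsto_atTop_mono (fun k => Nat.le_succ (φ k)) hφtop
    have hInext : Tendsto (fun k => IAb A b (x (φ k + 1))) atTop (nhds L) :=
      hL.comp hnexttop
    have hnextconv : Tendsto (fun k => x (φ k + 1)) atTop (nhds (EMop A b xh)) := by
      rw [tendsto_pi_nhds]
      intro j
      simp only [hiter]
      exact (tendsto_pi_nhds.1 hyconv j).mul (tendsto_ff hyconv hdpos j)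
    -- KL tends to 0
    have hfk : ∀ k j, 0 < ff A b (y k) j :=
      fun k => ff_pos hA hcol hb (dd_pos hA hrow (hypos k))
    have hxnextpos : ∀ k j, 0 < x (k + 1) j := fun k j => hx _ j
    have hKL0 : Tendsto (fun k => KL (x (φ k + 1)) (y (φ k))) atTop (nhds 0) := by
      have hub : ∀ k, KL (x (φ k + 1)) (y (φ k))
          ≤ IAb A b (y (φ k)) - IAb A b (x (φ k + 1)) := by
        intro k
        have hdes := descent hA hcol hrow hb (hypos (φ k))
        rw [← hiter (φ k)] at hdes
        linarith
      exact squeeze_zero (fun k => KL_nonneg (hxnextpos (φ k)) (hypos (φ k))) hub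
        (by simpa using hIy.sub hInext)
    -- componentwise conclusion
    funext j
    have hff : 0 < ff A b xh j := ff_pos hA hcol hb hdpos j
    by_cases hxhj : xh j = 0
    · show xh j * ff A b xh j = xh j
      rw [hxhj, zero_mul]
    · have hxh0 : 0 ≤ xh j :=
        ge_of_tendsto (tendsto_pi_nhds.1 hconv j)
          (Filter.Eventually.of_forall fun k => (hx (φ k) j).le)
      have hxhp : 0 < xh j := lt_of_le_of_ne hxh0 (Ne.symm hxhj)
      have hc : 0 < xh j * ff A b xh j := mul_pos hxhp hff
      set t : ℕ → ℝ := fun k =>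
        x (φ k + 1) j * Real.log (x (φ k + 1) j / y (φ k) j)
          - (x (φ k + 1) j - y (φ k) j) with ht
      have htnn : ∀ k, 0 ≤ t k :=
        fun k => g_nonneg (hxnextpos (φ k) j) (hypos (φ k) j)
      have htle : ∀ k, t k ≤ KL (x (φ k + 1)) (y (φ k)) := by
        intro k
        rw [KL_eq]
        exact Finset.single_le_sum
          (fun j' _ => g_nonneg (hxnextpos (φ k) j') (hypos (φ k) j'))
          (Finset.mem_univ j)
      have ht0 : Tendsto t atTop (nhds 0) := squeeze_zero htnn htle hKL0
      -- continuity limit of t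
      have hu : Tendsto (fun k => x (φ k + 1) j) atTop (nhds (xh j * ff A b xh j)) :=
        tendsto_pi_nhds.1 hnextconv j
      have hv : Tendsto (fun k => y (φ k) j) atTop (nhds (xh j)) :=
        tendsto_pi_nhds.1 hyconv j
      have ht1 : Tendsto t atTop (nhds
          (xh j * ff A b xh j * Real.log (xh j * ff A b xh j / xh j)
            - (xh j * ff A b xh j - xh j))) := by
        apply Tendsto.sub
        · exact hu.mul ((hu.div hv hxhp.ne').log (ne_of_gt (div_pos hc hxhp)))
        · exact hu.sub hv
      have hzero : xh j * ff A b xh j * Real.log (xh j * ff A b xh j / xh j)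
          - (xh j * ff A b xh j - xh j) = 0 := tendsto_nhds_unique ht1 ht0
      exact g_eq_zero hc hxhp hzero
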